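/- arXiv:1401.1183 — 4 statements merged into one kernel-verified Lean document; each statement's English description precedes it below -/
import Mathlib

section
/- Let A be a symmetric m-th order tensor and B a symmetric positive definite m-th order tensor with m even. Define f(x) = (A x^m / B x^m) ‖x‖^m. A pair (λ, x) with ‖x‖ = 1 satisfies A x^{m-1} = λ B x^{m-1} if and only if x is a KKT point of the problem of maximizing f over the unit sphere with Lagrange multiplier λ (for the constraint ‖x‖^m = 1), i.e., ∇f(x) − λ m x = 0 with λ = A x^m / B x^m. -/
open scoped BigOperators

/-- Contraction of an `(m+1)`-th order, `n`-dimensional tensor with `m` copies of `x`,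
yielding the vector `A x^m` (i.e. `A x^{order-1}`). -/
noncomputable def tvec {m n : ℕ} (A : (Fin (m + 1) → Fin n) → ℝ) (x : Fin n → ℝ) :
    Fin n → ℝ :=
  fun i => ∑ j : Fin m → Fin n, A (Fin.cons i j) * ∏ k, x (j k)

/-- Full contraction of an `m`-th order, `n`-dimensional tensor with `m` copies of `x`. -/
noncomputable def tscal {m n : ℕ} (A : (Fin m → Fin n) → ℝ) (x : Fin n → ℝ) : ℝ :=
  ∑ j : Fin m → Fin n, A j * ∏ k, x (j k)

/-- A tensor is symmetric if invariant under index permutations. -/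
def IsSymmT {m n : ℕ} (A : (Fin m → Fin n) → ℝ) : Prop :=
  ∀ (σ : Equiv.Perm (Fin m)) (i : Fin m → Fin n), A (i ∘ σ) = A i

/-- Euclidean norm on `Fin n → ℝ`. -/
noncomputable def vnorm {n : ℕ} (x : Fin n → ℝ) : ℝ :=
  Real.sqrt (∑ i, x i ^ 2)

lemma erase_zero_eq_map (m : ℕ) :
    (Finset.univ.erase (0 : Fin (m+1))) = Finset.map ⟨Fin.succ, Fin.succ_injective m⟩ Finset.univ := by
  ext l
  simp only [Finset.mem_erase, Finset.mem_univ, and_true, Finset.mem_map,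
    Function.Embedding.coeFn_mk, true_and]
  rw [← Fin.exists_succ_eq]

lemma prod_cons_erase_zero {m n : ℕ} (i : Fin n) (t : Fin m → Fin n) (x : Fin n → ℝ) :
    ∏ l ∈ Finset.univ.erase (0 : Fin (m+1)), x ((Fin.cons i t : Fin (m+1) → Fin n) l)
      = ∏ k : Fin m, x (t k) := by
  rw [erase_zero_eq_map, Finset.prod_map]
  simp

lemma tscal_eq_sum_tvec {m n : ℕ} (A : (Fin (m+1) → Fin n) → ℝ) (x : Fin n → ℝ) :
    tscal A x = ∑ i, x i * tvec A x i := by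
  unfold tscal tvec
  rw [← Fintype.sum_equiv (Fin.consEquiv fun _ : Fin (m+1) => Fin n)
      (fun p => A (Fin.cons p.1 p.2) * ∏ k, x ((Fin.cons p.1 p.2 : Fin (m+1) → Fin n) k))
      (fun j => A j * ∏ k, x (j k)) (fun p => rfl),
    Fintype.sum_prod_type]
  refine Finset.sum_congr rfl fun i _ => ?_
  rw [Finset.mul_sum]
  refine Finset.sum_congr rfl fun t _ => ?_
  rw [Fin.prod_univ_succ]
  simp [mul_comm, mul_assoc, mul_left_comm]

lemma tscal_hasFDerivAt {M n : ℕ} (A : (Fin M → Fin n) → ℝ) (x : Fin n → ℝ) :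
    HasFDerivAt (tscal A)
      (∑ j : Fin M → Fin n, A j •
        ∑ k : Fin M, (∏ l ∈ Finset.univ.erase k, x (j l)) •
          (ContinuousLinearMap.proj (j k) : (Fin n → ℝ) →L[ℝ] ℝ)) x := by
  show HasFDerivAt (fun y : Fin n → ℝ => ∑ j : Fin M → Fin n, A j * ∏ k, y (j k)) _ x
  refine HasFDerivAt.fun_sum fun j _ => ?_
  have h : HasFDerivAt (fun y : Fin n → ℝ => ∏ k, y (j k))
      (∑ k : Fin M, (∏ l ∈ Finset.univ.erase k, x (j l)) •
        (ContinuousLinearMap.proj (j k) : (Fin n → ℝ) →L[ℝ] ℝ)) x :=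
    HasFDerivAt.finset_prod fun k _ => hasFDerivAt_apply (j k) x
  exact h.const_mul (A j)

lemma deriv_sum_symm {m n : ℕ} (A : (Fin (m+1) → Fin n) → ℝ) (hA : IsSymmT A)
    (x v : Fin n → ℝ) :
    ∑ j : Fin (m+1) → Fin n, A j * ∑ k, (∏ l ∈ Finset.univ.erase k, x (j l)) * v (j k)
      = (m+1 : ℝ) * ∑ i, tvec A x i * v i := by
  have hfix : ∀ kk : Fin (m+1),
      (∑ j : Fin (m+1) → Fin n, A j * ((∏ l ∈ Finset.univ.erase kk, x (j l)) * v (j kk)))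
        = ∑ i, tvec A x i * v i := by
    intro kk
    set σ : Equiv.Perm (Fin (m+1)) := Equiv.swap 0 kk with hσ
    have e : (Fin (m+1) → Fin n) ≃ (Fin (m+1) → Fin n) :=
      Equiv.arrowCongr σ.symm (Equiv.refl (Fin n))
    have step1 :
        (∑ j : Fin (m+1) → Fin n, A j * ((∏ l ∈ Finset.univ.erase (0:Fin (m+1)), x (j l)) * v (j 0)))
          = ∑ j : Fin (m+1) → Fin n, A j * ((∏ l ∈ Finset.univ.erase kk, x (j l)) * v (j kk)) := by
      refine Fintype.sum_equiv (Equiv.arrowCongr σ.symm (Equiv.refl (Fin n))) _ _ fun j => ?_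
      have he : (Equiv.arrowCongr σ.symm (Equiv.refl (Fin n))) j = j ∘ σ := by
        funext l; simp [Equiv.arrowCongr]
      rw [he, hA σ j]
      congr 1
      have hk0 : (j ∘ σ) kk = j 0 := by simp [hσ, Equiv.swap_apply_right]
      rw [hk0]
      congr 1
      have hswap : ∀ a : Fin (m+1), σ (σ a) = a := fun a => Equiv.swap_apply_self 0 kk a
      refine Finset.prod_bij' (fun a _ => σ a) (fun a _ => σ a) ?_ ?_ ?_ ?_ ?_
      · intro a ha
        rw [Finset.mem_erase] at ha ⊢
        refine ⟨fun h0 => ha.1 ?_, Finset.mem_univ _⟩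
        have := congrArg σ h0
        rw [hswap] at this
        simpa [hσ, Equiv.swap_apply_right] using this
      · intro a ha
        rw [Finset.mem_erase] at ha ⊢
        refine ⟨fun h0 => ha.1 ?_, Finset.mem_univ _⟩
        have := congrArg σ h0
        rw [hswap] at this
        simpa [hσ, Equiv.swap_apply_left] using this
      · intro a _; exact hswap a
      · intro a _; exact hswap a
      · intro a _; rw [Function.comp_apply, hswap]
    rw [← step1]
    -- now the k = 0 case
    rw [← Fintype.sum_equiv (Fin.consEquiv fun _ : Fin (m+1) => Fin n)
        (fun p => A (Fin.cons p.1 p.2) *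
          ((∏ l ∈ Finset.univ.erase (0:Fin (m+1)), x ((Fin.cons p.1 p.2 : Fin (m+1) → Fin n) l)) *
            v ((Fin.cons p.1 p.2 : Fin (m+1) → Fin n) 0)))
        (fun j => A j * ((∏ l ∈ Finset.univ.erase (0:Fin (m+1)), x (j l)) * v (j 0)))
        (fun p => rfl),
      Fintype.sum_prod_type]
    refine Finset.sum_congr rfl fun i _ => ?_
    unfold tvec
    rw [Finset.sum_mul]
    refine Finset.sum_congr rfl fun t _ => ?_
    rw [prod_cons_erase_zero]
    simp [mul_comm, mul_assoc, mul_left_comm]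
  calc ∑ j : Fin (m+1) → Fin n, A j * ∑ k, (∏ l ∈ Finset.univ.erase k, x (j l)) * v (j k)
      = ∑ k : Fin (m+1), ∑ j : Fin (m+1) → Fin n,
          A j * ((∏ l ∈ Finset.univ.erase k, x (j l)) * v (j k)) := by
        rw [Finset.sum_comm]
        exact Finset.sum_congr rfl fun j _ => by rw [Finset.mul_sum]
    _ = ∑ _k : Fin (m+1), ∑ i, tvec A x i * v i := Finset.sum_congr rfl fun k _ => hfix k
    _ = (m+1 : ℝ) * ∑ i, tvec A x i * v i := by
        rw [Finset.sum_const, Finset.card_univ, Fintype.card_fin, nsmul_eq_mul]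
        push_cast; ring

lemma fderiv_formula {m n : ℕ} (k : ℕ) (hk : m + 1 = 2 * k)
    (A B : (Fin (m+1) → Fin n) → ℝ) (hA : IsSymmT A) (hB : IsSymmT B)
    (x : Fin n → ℝ) (hs : (∑ i, x i ^ 2) = 1) (hSB : tscal B x ≠ 0) (v : Fin n → ℝ) :
    fderiv ℝ (fun y : Fin n → ℝ => tscal A y / tscal B y * vnorm y ^ (m + 1)) x v =
      tscal A x * (tscal B x)⁻¹ * ((m+1 : ℝ) * ∑ i, x i * v i)
      + (tscal A x * (-((tscal B x) ^ 2)⁻¹ * ((m+1:ℝ) * ∑ i, tvec B x i * v i))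
         + (tscal B x)⁻¹ * ((m+1:ℝ) * ∑ i, tvec A x i * v i)) := by
  have hfun : (fun y : Fin n → ℝ => tscal A y / tscal B y * vnorm y ^ (m + 1))
      = fun y => tscal A y * (tscal B y)⁻¹ * (∑ i, y i ^ 2) ^ k := by
    funext y
    rw [div_eq_mul_inv]
    congr 1
    unfold vnorm
    rw [hk, pow_mul, Real.sq_sqrt (by positivity)]
  have hA' := tscal_hasFDerivAt A x
  have hB' := tscal_hasFDerivAt B x
  have hinv := (hasDerivAt_inv hSB).comp_hasFDerivAt x hB'
  have hs' := HasFDerivAt.fun_sum (u := (Finset.univ : Finset (Fin n)))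
    fun i (_ : i ∈ Finset.univ) =>
      (hasDerivAt_pow 2 (x i)).comp_hasFDerivAt x (hasFDerivAt_apply (𝕜 := ℝ) i x)
  have hpow := (hasDerivAt_pow k (∑ i, x i ^ 2)).comp_hasFDerivAt x hs'
  have hF := (hA'.mul hinv).mul hpow
  have hD := hF.fderiv
  have hDf : fderiv ℝ (fun y : Fin n → ℝ => tscal A y / tscal B y * vnorm y ^ (m + 1)) x
      = (tscal A x * (tscal B x)⁻¹) •
          ((↑k * (∑ i, x i ^ 2) ^ (k - 1)) •
            ∑ i : Fin n, ((2:ℝ) * x i ^ (2 - 1)) • (ContinuousLinearMap.proj i))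
        + ((∑ i, x i ^ 2) ^ k) •
          (tscal A x • ((-(tscal B x ^ 2)⁻¹) •
              (∑ j : Fin (m+1) → Fin n, B j •
                ∑ kk : Fin (m+1), (∏ l ∈ Finset.univ.erase kk, x (j l)) •
                  (ContinuousLinearMap.proj (j kk) : (Fin n → ℝ) →L[ℝ] ℝ)))
            + (tscal B x)⁻¹ •
              (∑ j : Fin (m+1) → Fin n, A j •
                ∑ kk : Fin (m+1), (∏ l ∈ Finset.univ.erase kk, x (j l)) •
                  (ContinuousLinearMap.proj (j kk) : (Fin n → ℝ) →L[ℝ] ℝ))) := by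
    rw [hfun]
    exact hD
  rw [hDf]
  simp only [ContinuousLinearMap.add_apply, ContinuousLinearMap.coe_smul',
    Pi.smul_apply, ContinuousLinearMap.coe_sum', Finset.sum_apply,
    ContinuousLinearMap.proj_apply, smul_eq_mul]
  have hsymA := deriv_sum_symm A hA x v
  have hsymB := deriv_sum_symm B hB x v
  simp only [mul_assoc] at hsymA hsymB ⊢
  rw [show (∑ j : Fin (m+1) → Fin n, A j * ∑ kk : Fin (m+1),
      (∏ l ∈ Finset.univ.erase kk, x (j l)) * v (j kk)) = _ from hsymA,
    show (∑ j : Fin (m+1) → Fin n, B j * ∑ kk : Fin (m+1),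
      (∏ l ∈ Finset.univ.erase kk, x (j l)) * v (j kk)) = _ from hsymB, hs]
  have h2 : ∑ i : Fin n, (2:ℝ) * (x i ^ (2 - 1) * v i) = 2 * ∑ i, x i * v i := by
    rw [Finset.mul_sum]
    exact Finset.sum_congr rfl fun i _ => by norm_num
  rw [one_pow, one_pow, h2]
  have hk' : ((k:ℝ)) * 2 = (m:ℝ) + 1 := by
    have h : ((m:ℝ) + 1) = 2 * k := by exact_mod_cast hk
    linarith
  linear_combination (tscal A x * (tscal B x)⁻¹ * (∑ i, x i * v i)) * hk'

lemma sum_mul_single {n : ℕ} (c : Fin n → ℝ) (i : Fin n) :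
    ∑ j, c j * (Pi.single i 1 : Fin n → ℝ) j = c i := by
  rw [Finset.sum_eq_single i]
  · simp
  · intro b _ hb; simp [Pi.single_apply, hb]
  · simp


/-- with `f(x) = (A x^m / B x^m) ‖x‖^m` (order `m+1`), a pair `(λ, x)` with
`‖x‖ = 1` satisfies `A x^{m} = λ B x^{m}` iff `x` is a KKT point of maximizing `f` over the
unit sphere with multiplier `λ`, i.e. `∇f(x) = λ (m+1) x` and `λ = A x^{m+1} / B x^{m+1}`. -/
theorem stmt_7 {m n : ℕ} (hmeven : Even (m + 1))
    (A B : (Fin (m + 1) → Fin n) → ℝ) (hA : IsSymmT A) (hB : IsSymmT B)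
    (hBpos : ∀ y : Fin n → ℝ, y ≠ 0 → 0 < tscal B y)
    (lam : ℝ) (x : Fin n → ℝ) (hx : vnorm x = 1) :
    tvec A x = lam • tvec B x ↔
      ((∀ v : Fin n → ℝ,
          fderiv ℝ (fun y : Fin n → ℝ => tscal A y / tscal B y * vnorm y ^ (m + 1)) x v =
            lam * (m + 1 : ℝ) * ∑ i, x i * v i) ∧
        lam = tscal A x / tscal B x) := by
  obtain ⟨k, hk⟩ := hmeven
  have hk2 : m + 1 = 2 * k := by omega
  have hs : (∑ i, x i ^ 2) = 1 := by
    have h0 : (0:ℝ) ≤ ∑ i, x i ^ 2 := by positivity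
    have h1 := congrArg (fun t : ℝ => t ^ 2) hx
    simpa [vnorm, Real.sq_sqrt h0] using h1
  have hxne : x ≠ 0 := by
    intro h; rw [h] at hs; simp at hs
  have hSB : tscal B x ≠ 0 := ne_of_gt (hBpos x hxne)
  have hSA := tscal_eq_sum_tvec A x
  have hSBx := tscal_eq_sum_tvec B x
  constructor
  · intro hT
    have hAv : ∀ i, tvec A x i = lam * tvec B x i := fun i => by rw [hT]; simp
    have hSAeq : tscal A x = lam * tscal B x := by
      rw [hSA, hSBx, Finset.mul_sum]
      exact Finset.sum_congr rfl fun i _ => by rw [hAv i]; ring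
    have hlam : lam = tscal A x / tscal B x := by
      rw [hSAeq]; field_simp
    refine ⟨fun v => ?_, hlam⟩
    rw [fderiv_formula k hk2 A B hA hB x hs hSB v]
    have hAsum : ∑ i, tvec A x i * v i = lam * ∑ i, tvec B x i * v i := by
      rw [Finset.mul_sum]; exact Finset.sum_congr rfl fun i _ => by rw [hAv i]; ring
    rw [hAsum, hSAeq]
    field_simp
    ring
  · rintro ⟨hder, hlam⟩
    funext i
    have h := hder (Pi.single i 1)
    rw [fderiv_formula k hk2 A B hA hB x hs hSB,
      sum_mul_single x i, sum_mul_single (tvec A x) i, sum_mul_single (tvec B x) i] at h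
    have hc : ((m:ℝ) + 1) ≠ 0 := by positivity
    have h3 : (tscal B x)⁻¹ * (((m:ℝ)+1) * tvec A x i)
        = tscal A x * ((tscal B x ^ 2)⁻¹ * (((m:ℝ)+1) * tvec B x i)) := by
      rw [hlam] at h
      linear_combination h
    simp only [Pi.smul_apply, smul_eq_mul]
    rw [hlam]
    calc tvec A x i
        = (tscal B x * ((tscal B x)⁻¹ * (((m:ℝ)+1) * tvec A x i))) / ((m:ℝ)+1) := by
          field_simp
      _ = (tscal B x * (tscal A x * ((tscal B x ^ 2)⁻¹ * (((m:ℝ)+1) * tvec B x i)))) / ((m:ℝ)+1) := by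
          rw [h3]
      _ = tscal A x / tscal B x * tvec B x i := by
          field_simp
end

section
/- Let f be continuously differentiable and convex on an open neighborhood Ω of a point w on the unit sphere, with ∇f(w) ≠ 0. Define v = ∇f(w)/‖∇f(w)‖. If v ∈ Ω and v ≠ w, then f(v) > f(w). -/
open Set

/-- Kofidis–Regalia ascent lemma: if `f` is convex and `C¹` on an open
neighborhood `Ω` of a unit vector `w` with `∇f(w) ≠ 0`, and
`v = ∇f(w)/‖∇f(w)‖` lies in `Ω` with `v ≠ w`, then `f(v) > f(w)`. -/
theorem stmt_8 {n : ℕ} (f : EuclideanSpace ℝ (Fin n) → ℝ)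
    (Ω : Set (EuclideanSpace ℝ (Fin n))) (hΩ : IsOpen Ω)
    (w : EuclideanSpace ℝ (Fin n)) (hw : w ∈ Ω) (hwnorm : ‖w‖ = 1)
    (hconv : ConvexOn ℝ Ω f) (hdiff : ContDiffOn ℝ 1 f Ω)
    (hg : gradient f w ≠ 0)
    (v : EuclideanSpace ℝ (Fin n)) (hv : v = ‖gradient f w‖⁻¹ • gradient f w)
    (hvΩ : v ∈ Ω) (hvw : v ≠ w) :
    f w < f v := by
  set g := gradient f w with hgdef
  have hgn : ‖g‖ ≠ 0 := norm_ne_zero_iff.mpr hg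
  -- f is differentiable at w
  have hda : DifferentiableAt ℝ f w :=
    (hdiff.differentiableOn one_ne_zero).differentiableAt (hΩ.mem_nhds hw)
  have hgr : HasGradientAt f g w := hda.hasGradientAt
  -- the affine path from w to v
  set γ : ℝ →ᵃ[ℝ] EuclideanSpace ℝ (Fin n) :=
    { toFun := fun t => w + t • (v - w)
      linear := LinearMap.toSpanSingleton ℝ _ (v - w)
      map_vadd' := by
        intro p q
        simp [LinearMap.toSpanSingleton_apply, add_smul]
        abel } with hγ
  have hγ0 : γ 0 = w := by simp [hγ]
  have hγ1 : γ 1 = v := by simp [hγ]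
  -- convexity of f ∘ γ on Icc 0 1
  have hsub : Icc (0:ℝ) 1 ⊆ γ ⁻¹' Ω := by
    intro t ht
    have : γ t = (1 - t) • w + t • v := by
      simp only [hγ, AffineMap.coe_mk]
      simp [smul_sub, sub_smul]
      abel
    simpa [Set.mem_preimage, this] using
      hconv.1 hw hvΩ (by linarith [ht.2]) ht.1 (by ring)
  have hconv1 : ConvexOn ℝ (Icc (0:ℝ) 1) (f ∘ γ) :=
    (hconv.comp_affineMap γ).subset hsub (convex_Icc 0 1)
  -- derivative of f ∘ γ at 0
  have hdγ : HasDerivAt γ (v - w) 0 := by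
    simp only [hγ, AffineMap.coe_mk]
    have h1 : HasDerivAt (fun t : ℝ => t • (v - w)) (v - w) 0 := by
      simpa using (hasDerivAt_id (0:ℝ)).smul_const (v - w)
    simpa using h1.const_add w
  have hderiv : HasDerivAt (f ∘ γ) (inner ℝ g (v - w) : ℝ) 0 := by
    have h := hgr.hasFDerivAt
    rw [← hγ0] at h
    have := (h.comp 0 hdγ.hasFDerivAt).hasDerivAt
    simpa using this
  -- slope inequality
  have hslope := hconv1.le_slope_of_hasDerivAt (by norm_num) (by norm_num)
    (by norm_num : (0:ℝ) < 1) hderiv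
  have hslope1 : slope (f ∘ γ) 0 1 = f v - f w := by
    simp [slope_def_field, hγ0, hγ1]
  rw [hslope1] at hslope
  -- the inner product is positive
  have hinner_v : (inner ℝ g v : ℝ) = ‖g‖ := by
    rw [hv]
    rw [real_inner_smul_right, real_inner_self_eq_norm_mul_norm]
    field_simp
  have hlt : (inner ℝ g w : ℝ) < ‖g‖ * ‖w‖ := by
    rw [inner_lt_norm_mul_iff_real]
    intro hcontra
    apply hvw
    rw [hwnorm, one_smul] at hcontra
    rw [hv, hcontra, smul_smul]
    simp [norm_smul, hwnorm, abs_of_nonneg (norm_nonneg g), inv_mul_cancel₀ hgn]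
  have hpos : (0:ℝ) < inner ℝ g (v - w) := by
    rw [inner_sub_right, hinner_v]
    rw [hwnorm, mul_one] at hlt
    linarith
  linarith
end

section
/- Let f be continuously differentiable and concave on an open neighborhood Ω of a point w on the unit sphere, with ∇f(w) ≠ 0. Define v = −∇f(w)/‖∇f(w)‖. If v ∈ Ω and v ≠ w, then f(v) < f(w). -/
open InnerProductSpace Set

/-- if `f` is concave and `C¹` on an open
neighborhood `Ω` of a unit vector `w` with `∇f(w) ≠ 0`, and
`v = -∇f(w)/‖∇f(w)‖` lies in `Ω` with `v ≠ w`, then `f(v) < f(w)`. -/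
theorem stmt_9 {n : ℕ} (f : EuclideanSpace ℝ (Fin n) → ℝ)
    (Ω : Set (EuclideanSpace ℝ (Fin n))) (hΩ : IsOpen Ω)
    (w : EuclideanSpace ℝ (Fin n)) (hw : w ∈ Ω) (hwnorm : ‖w‖ = 1)
    (hconc : ConcaveOn ℝ Ω f) (hdiff : ContDiffOn ℝ 1 f Ω)
    (hg : gradient f w ≠ 0)
    (v : EuclideanSpace ℝ (Fin n)) (hv : v = -(‖gradient f w‖⁻¹ • gradient f w))
    (hvΩ : v ∈ Ω) (hvw : v ≠ w) :
    f v < f w := by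
  set g := gradient f w with hgdef
  have hgn : (0:ℝ) < ‖g‖ := norm_pos_iff.mpr hg
  -- the directional derivative ⟪g, v - w⟫ is negative
  have h1 : (inner ℝ g v : ℝ) = -‖g‖ := by
    rw [hv, inner_neg_right, inner_smul_right, real_inner_self_eq_norm_sq]
    field_simp
  have h2 : -‖g‖ < (inner ℝ g w : ℝ) := by
    have hne : ‖w‖ • (-g) ≠ ‖-g‖ • w := by
      intro h
      apply hvw
      rw [hwnorm, one_smul, norm_neg] at h
      rw [hv]
      rw [show -(‖g‖⁻¹ • g) = ‖g‖⁻¹ • (-g) by rw [smul_neg], h, smul_smul,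
        inv_mul_cancel₀ (ne_of_gt hgn), one_smul]
    have := inner_lt_norm_mul_iff_real.mpr hne
    rw [inner_neg_left, norm_neg, hwnorm, mul_one] at this
    linarith
  have hdneg : (inner ℝ g (v - w) : ℝ) < 0 := by
    rw [inner_sub_right, h1]; linarith
  -- f is differentiable at w with gradient g
  have hG : HasGradientAt f g w :=
    ((hdiff.contDiffAt (hΩ.mem_nhds hw)).differentiableAt one_ne_zero).hasGradientAt
  have hF : HasFDerivAt f (toDual ℝ _ g) w := hG.hasFDerivAt
  -- the line from w to v
  set L : ℝ → EuclideanSpace ℝ (Fin n) := fun t => AffineMap.lineMap w v t with hL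
  have hL0 : L 0 = w := by simp [hL]
  have hL1 : L 1 = v := by simp [hL]
  have hLderiv : HasDerivAt L (v - w) 0 := by
    have : HasDerivAt (fun t : ℝ => t • (v - w) + w) (v - w) 0 := by
      simpa using ((hasDerivAt_id (0:ℝ)).smul_const (v - w)).add_const w
    refine this.congr_of_eventuallyEq ?_
    filter_upwards with t
    simp [hL, AffineMap.lineMap_apply_module]
    module
  -- composite is concave on [0,1]
  have hsub : Icc (0:ℝ) 1 ⊆ (AffineMap.lineMap w v : ℝ →ᵃ[ℝ] _) ⁻¹' Ω := by
    intro t ht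
    have : AffineMap.lineMap w v t ∈ segment ℝ w v := by
      rw [segment_eq_image_lineMap]; exact ⟨t, ht, rfl⟩
    exact hconc.1.segment_subset hw hvΩ this
  have hφconc : ConcaveOn ℝ (Icc (0:ℝ) 1) (f ∘ L) :=
    (hconc.comp_affineMap (AffineMap.lineMap w v)).subset hsub (convex_Icc 0 1)
  -- derivative of the composite at 0
  have hφderiv : HasDerivAt (f ∘ L) (inner ℝ g (v - w) : ℝ) 0 := by
    have hF' : HasFDerivAt f (toDual ℝ _ g) (L 0) := by rw [hL0]; exact hF
    have := hF'.comp_hasDerivAt 0 hLderiv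
    simpa using this
  have := hφconc.slope_le_of_hasDerivAt ⟨le_refl 0, zero_le_one⟩ ⟨zero_le_one, le_refl 1⟩
    one_pos hφderiv
  rw [slope_def_field] at this
  simp only [Function.comp_apply, hL0, hL1, sub_zero, div_one] at this
  linarith
end

section
/- Let A be a symmetric m-th order n-dimensional tensor with m even and B positive definite symmetric of the same order and dimension. Then the generalized Rayleigh quotient λ(x) = A x^m / B x^m is a continuous function on the unit sphere, attains its maximum and minimum, and every maximizer/minimizer x* (with the corresponding λ) is a generalized eigenpair: A (x*)^{m-1} = λ B (x*)^{m-1}. -/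
open scoped BigOperators

section aux
variable {m n : ℕ}

lemma tscal_smul {p : ℕ} (C : (Fin p → Fin n) → ℝ) (c : ℝ) (y : Fin n → ℝ) :
    tscal C (c • y) = c ^ p * tscal C y := by
  unfold tscal
  rw [Finset.mul_sum]
  refine Finset.sum_congr rfl fun j _ => ?_
  simp only [Pi.smul_apply, smul_eq_mul]
  rw [Finset.prod_mul_distrib, Finset.prod_const, Finset.card_univ, Fintype.card_fin]
  ring

lemma continuous_tscal {p : ℕ} (C : (Fin p → Fin n) → ℝ) : Continuous (tscal C) := by
  unfold tscal
  exact continuous_finset_sum _ fun j _ =>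
    (continuous_const.mul (continuous_finset_prod _ fun k _ => continuous_apply _))

lemma tscal_zero {p : ℕ} (C : (Fin (p+1) → Fin n) → ℝ) : tscal C (0 : Fin n → ℝ) = 0 := by
  unfold tscal
  simp

lemma vnorm_pos {y : Fin n → ℝ} (hy : y ≠ 0) : 0 < vnorm y := by
  unfold vnorm
  apply Real.sqrt_pos.2
  obtain ⟨i, hi⟩ := Function.ne_iff.1 hy
  exact Finset.sum_pos' (fun i _ => sq_nonneg _)
    ⟨i, Finset.mem_univ i, (sq_nonneg _).lt_of_ne (Ne.symm (pow_ne_zero 2 hi))⟩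

lemma vnorm_ne {y : Fin n → ℝ} (hy : vnorm y = 1) : y ≠ 0 := by
  intro h
  rw [h] at hy
  unfold vnorm at hy
  simp at hy

lemma vnorm_smul (c : ℝ) (y : Fin n → ℝ) : vnorm (c • y) = |c| * vnorm y := by
  unfold vnorm
  have : ∑ i, (c • y) i ^ 2 = c ^ 2 * ∑ i, y i ^ 2 := by
    rw [Finset.mul_sum]
    exact Finset.sum_congr rfl fun i _ => by simp [mul_pow]
  rw [this, Real.sqrt_mul (sq_nonneg c), Real.sqrt_sq_eq_abs]

lemma continuous_vnorm : Continuous (vnorm (n := n)) :=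
  Real.continuous_sqrt.comp (continuous_finset_sum _ fun i _ => (continuous_apply i).pow 2)

end aux

section deriv
variable {m n : ℕ}

noncomputable def tD (C : (Fin (m + 1) → Fin n) → ℝ) (x : Fin n → ℝ) :
    (Fin n → ℝ) →L[ℝ] ℝ :=
  ∑ j : Fin (m + 1) → Fin n, C j •
    (∑ k : Fin (m + 1), (∏ l ∈ Finset.univ.erase k, x (j l)) •
      (ContinuousLinearMap.proj (R := ℝ) (φ := fun _ : Fin n => ℝ) (j k)))

lemma hasFDerivAt_tscal (C : (Fin (m + 1) → Fin n) → ℝ) (x : Fin n → ℝ) :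
    HasFDerivAt (tscal C) (tD C x) x := by
  unfold tscal tD
  apply HasFDerivAt.fun_sum
  intro j _
  have h : HasFDerivAt (fun y : Fin n → ℝ => ∏ k, y (j k))
      (∑ k : Fin (m + 1), (∏ l ∈ Finset.univ.erase k, x (j l)) •
        (ContinuousLinearMap.proj (R := ℝ) (φ := fun _ : Fin n => ℝ) (j k))) x := by
    exact HasFDerivAt.finset_prod (fun k _ => hasFDerivAt_apply (j k) x)
  exact h.const_mul (C j)

lemma tD_apply (C : (Fin (m + 1) → Fin n) → ℝ) (x v : Fin n → ℝ) :
    tD C x v = ∑ j : Fin (m + 1) → Fin n, C j *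
      ∑ k : Fin (m + 1), (∏ l ∈ Finset.univ.erase k, x (j l)) * v (j k) := by
  unfold tD
  simp [ContinuousLinearMap.sum_apply, Finset.mul_sum]

lemma erase_zero_eq : (Finset.univ : Finset (Fin (m + 1))).erase 0 =
    Finset.univ.map (Fin.succEmb m) := by
  ext l
  simp only [Finset.mem_erase, Finset.mem_univ, and_true, Finset.mem_map, Fin.coe_succEmb]
  constructor
  · intro hl
    exact ⟨l.pred hl, trivial, Fin.succ_pred l hl⟩
  · rintro ⟨k, -, rfl⟩
    exact Fin.succ_ne_zero k

lemma key_sum (C : (Fin (m + 1) → Fin n) → ℝ) (hC : IsSymmT C) (x v : Fin n → ℝ)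
    (k : Fin (m + 1)) :
    ∑ j : Fin (m + 1) → Fin n, C j * ((∏ l ∈ Finset.univ.erase k, x (j l)) * v (j k))
      = ∑ i, v i * tvec C x i := by
  classical
  set σ : Equiv.Perm (Fin (m + 1)) := Equiv.swap 0 k with hσ
  have step1 : ∑ j : Fin (m + 1) → Fin n, C j * ((∏ l ∈ Finset.univ.erase k, x (j l)) * v (j k))
      = ∑ j : Fin (m + 1) → Fin n, C j * ((∏ l ∈ Finset.univ.erase 0, x (j l)) * v (j 0)) := by
    apply Fintype.sum_equiv (Equiv.arrowCongr σ.symm (Equiv.refl (Fin n)))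
    intro j
    have hcomp : (Equiv.arrowCongr σ.symm (Equiv.refl (Fin n))) j = j ∘ σ := rfl
    rw [hcomp, hC σ j]
    have h0 : (j ∘ σ) 0 = j k := by simp [hσ]
    rw [h0]
    congr 1
    congr 1
    -- product reindex: ∏ l ∈ erase k, x (j l) = ∏ l ∈ erase 0, x (j (σ l))
    apply Finset.prod_bij' (fun l _ => σ l) (fun l _ => σ l)
    · intro a ha
      simp only [Finset.mem_erase, Finset.mem_univ, and_true] at ha ⊢
      intro h
      apply ha
      have := congrArg σ h
      simpa [hσ] using this
    · intro a ha
      simp only [Finset.mem_erase, Finset.mem_univ, and_true] at ha ⊢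
      intro h
      apply ha
      have := congrArg σ h
      simp only [Equiv.swap_apply_self, hσ] at this
      rw [this]
      simp [hσ]
    · intro a _; simp [hσ]
    · intro a _; simp [hσ]
    · intro a ha
      simp [hσ]
  rw [step1]
  have step2 : ∑ j : Fin (m + 1) → Fin n, C j * ((∏ l ∈ Finset.univ.erase 0, x (j l)) * v (j 0))
      = ∑ p : Fin n × (Fin m → Fin n), v p.1 * (C (Fin.cons p.1 p.2) * ∏ k', x (p.2 k')) := by
    apply Fintype.sum_equiv (Fin.consEquiv (fun _ : Fin (m + 1) => Fin n)).symm
    intro j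
    have h1 : (Fin.consEquiv (fun _ : Fin (m + 1) => Fin n)).symm j
        = (j 0, fun i : Fin m => j i.succ) := rfl
    rw [h1]
    have h2 : Fin.cons (j 0) (fun i : Fin m => j i.succ) = j := by
      funext l
      exact congrFun (Fin.cons_self_tail j) l
    simp only [h2]
    have h3 : ∏ l ∈ Finset.univ.erase 0, x (j l) = ∏ k' : Fin m, x (j k'.succ) := by
      rw [erase_zero_eq, Finset.prod_map]
      rfl
    rw [h3]; ring
  rw [step2, Fintype.sum_prod_type]
  refine Finset.sum_congr rfl fun i _ => ?_
  simp only []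
  rw [← Finset.mul_sum]
  rfl

end deriv

section extr
variable {m n : ℕ}

lemma tD_apply_symm (C : (Fin (m + 1) → Fin n) → ℝ) (hC : IsSymmT C) (x v : Fin n → ℝ) :
    tD C x v = ((m : ℝ) + 1) * ∑ i, v i * tvec C x i := by
  rw [tD_apply]
  simp only [Finset.mul_sum]
  rw [Finset.sum_comm]
  have : ∀ k : Fin (m + 1), ∑ j : Fin (m + 1) → Fin n,
      C j * ((∏ l ∈ Finset.univ.erase k, x (j l)) * v (j k))
        = ∑ i, v i * tvec C x i := fun k => key_sum C hC x v k
  calc ∑ k : Fin (m + 1), ∑ j : Fin (m + 1) → Fin n,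
        C j * ((∏ l ∈ Finset.univ.erase k, x (j l)) * v (j k))
      = ∑ _k : Fin (m + 1), ∑ i, v i * tvec C x i :=
        Finset.sum_congr rfl fun k _ => this k
    _ = ∑ i, ((m : ℝ) + 1) * (v i * tvec C x i) := by
        rw [Finset.sum_const, Finset.card_univ, Fintype.card_fin, nsmul_eq_mul, Finset.mul_sum]
        push_cast
        exact Finset.sum_congr rfl fun i _ => by ring

end extr

section maxcase
variable {m n : ℕ}

lemma single_mul_sum (i : Fin n) (w : Fin n → ℝ) :
    ∑ i', (Pi.single i (1:ℝ) : Fin n → ℝ) i' * w i' = w i := by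
  rw [Finset.sum_eq_single i]
  · simp
  · intro b _ hb
    simp [Pi.single_apply, hb]
  · intro h
    exact absurd (Finset.mem_univ i) h

lemma max_case (A B : (Fin (m + 1) → Fin n) → ℝ) (hA : IsSymmT A) (hB : IsSymmT B)
    (hBpos : ∀ y : Fin n → ℝ, y ≠ 0 → 0 < tscal B y) (x : Fin n → ℝ) (hx : vnorm x = 1)
    (hmax : ∀ y, vnorm y = 1 → tscal A y / tscal B y ≤ tscal A x / tscal B x) :
    tvec A x = (tscal A x / tscal B x) • tvec B x := by
  classical
  set lam := tscal A x / tscal B x with hlam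
  have hxne := vnorm_ne hx
  have hBx := hBpos x hxne
  have hAx : tscal A x = lam * tscal B x := by
    rw [hlam, div_mul_cancel₀ _ hBx.ne']
  set g := fun y : Fin n → ℝ => tscal A y - lam * tscal B y with hg
  have hgx : g x = 0 := by rw [hg]; simp [hAx]
  have hgle : ∀ y, g y ≤ 0 := by
    intro y
    by_cases hy : y = 0
    · subst hy; simp [hg, tscal_zero]
    · have ht := vnorm_pos hy
      set t := vnorm y with htdef
      set z := t⁻¹ • y with hz
      have hzn : vnorm z = 1 := by
        rw [hz, vnorm_smul, abs_of_pos (inv_pos.2 ht), inv_mul_cancel₀ ht.ne']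
      have hBz := hBpos z (vnorm_ne hzn)
      have hyz : y = t • z := by
        rw [hz, smul_smul, mul_inv_cancel₀ ht.ne', one_smul]
      have hratio := hmax z hzn
      have hgz : g z ≤ 0 := by
        rw [hg]
        simp only
        rw [sub_nonpos]
        calc tscal A z = (tscal A z / tscal B z) * tscal B z := by
              rw [div_mul_cancel₀ _ hBz.ne']
          _ ≤ lam * tscal B z := mul_le_mul_of_nonneg_right hratio hBz.le
      have hgy : g y = t ^ (m + 1) * g z := by
        have hsA : tscal A (t • z) = t ^ (m + 1) * tscal A z := tscal_smul A t z
        have hsB : tscal B (t • z) = t ^ (m + 1) * tscal B z := tscal_smul B t z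
        rw [hg]; simp only
        rw [hyz, hsA, hsB]; ring
      rw [hgy]
      exact mul_nonpos_of_nonneg_of_nonpos (pow_nonneg ht.le _) hgz
  have hlocal : IsLocalMax g x :=
    Filter.Eventually.of_forall (fun y => (hgle y).trans_eq hgx.symm)
  have hd : HasFDerivAt g (tD A x - lam • tD B x) x :=
    (hasFDerivAt_tscal A x).sub ((hasFDerivAt_tscal B x).const_mul lam)
  have h0 := hlocal.hasFDerivAt_eq_zero hd
  funext i
  have hv := congrArg (fun L : (Fin n → ℝ) →L[ℝ] ℝ => L (Pi.single i 1)) h0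
  simp only [ContinuousLinearMap.sub_apply, ContinuousLinearMap.smul_apply,
    ContinuousLinearMap.zero_apply, smul_eq_mul] at hv
  rw [tD_apply_symm A hA, tD_apply_symm B hB, single_mul_sum, single_mul_sum] at hv
  have hm1 : (0:ℝ) < (m : ℝ) + 1 := by positivity
  have heq : ((m:ℝ) + 1) * tvec A x i = ((m:ℝ) + 1) * (lam * tvec B x i) := by linarith
  have := mul_left_cancel₀ hm1.ne' heq
  simpa [Pi.smul_apply, smul_eq_mul] using this

end maxcase

section main
variable {m n : ℕ}

lemma sphere_compact (hn : 0 < n) :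
    IsCompact {y : Fin n → ℝ | vnorm y = 1} := by
  apply Metric.isCompact_of_isClosed_isBounded
  · exact isClosed_eq continuous_vnorm continuous_const
  · apply (Metric.isBounded_closedBall (x := (0 : Fin n → ℝ)) (r := 1)).subset
    intro y hy
    simp only [Set.mem_setOf_eq] at hy
    rw [Metric.mem_closedBall, dist_zero_right]
    rw [pi_norm_le_iff_of_nonneg zero_le_one]
    intro i
    have h1 : y i ^ 2 ≤ ∑ i', y i' ^ 2 :=
      Finset.single_le_sum (fun i' _ => sq_nonneg (y i')) (Finset.mem_univ i)
    have h2 : Real.sqrt (y i ^ 2) ≤ Real.sqrt (∑ i', y i' ^ 2) := Real.sqrt_le_sqrt h1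
    rw [Real.sqrt_sq_eq_abs] at h2
    calc ‖y i‖ = |y i| := rfl
      _ ≤ vnorm y := h2
      _ = 1 := hy

lemma sphere_nonempty (hn : 0 < n) :
    Set.Nonempty {y : Fin n → ℝ | vnorm y = 1} := by
  refine ⟨Pi.single ⟨0, hn⟩ 1, ?_⟩
  simp only [Set.mem_setOf_eq]
  unfold vnorm
  have : ∑ i, (Pi.single (⟨0, hn⟩ : Fin n) (1:ℝ) : Fin n → ℝ) i ^ 2 = 1 := by
    rw [Finset.sum_eq_single (⟨0, hn⟩ : Fin n)]
    · simp
    · intro b _ hb; simp [Pi.single_apply, hb]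
    · intro h; exact absurd (Finset.mem_univ _) h
  rw [this, Real.sqrt_one]

end main

/-- the generalized Rayleigh quotient `λ(x) = A x^m / B x^m` is continuous
on the unit sphere, attains its maximum and minimum there, and every maximizer or
minimizer yields a generalized eigenpair `A x^{m-1} = λ(x) B x^{m-1}`. -/
theorem stmt_17 {m n : ℕ} (hn : 0 < n) (hmeven : Even (m + 1))
    (A B : (Fin (m + 1) → Fin n) → ℝ) (hA : IsSymmT A) (hB : IsSymmT B)
    (hBpos : ∀ y : Fin n → ℝ, y ≠ 0 → 0 < tscal B y) :
    ContinuousOn (fun y : Fin n → ℝ => tscal A y / tscal B y) {y | vnorm y = 1} ∧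
    (∃ xmax : Fin n → ℝ, vnorm xmax = 1 ∧
      (∀ y : Fin n → ℝ, vnorm y = 1 →
        tscal A y / tscal B y ≤ tscal A xmax / tscal B xmax)) ∧
    (∃ xmin : Fin n → ℝ, vnorm xmin = 1 ∧
      (∀ y : Fin n → ℝ, vnorm y = 1 →
        tscal A xmin / tscal B xmin ≤ tscal A y / tscal B y)) ∧
    (∀ x : Fin n → ℝ, vnorm x = 1 →
      ((∀ y : Fin n → ℝ, vnorm y = 1 →
          tscal A y / tscal B y ≤ tscal A x / tscal B x) ∨
        (∀ y : Fin n → ℝ, vnorm y = 1 →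
          tscal A x / tscal B x ≤ tscal A y / tscal B y)) →
      tvec A x = (tscal A x / tscal B x) • tvec B x) := by
  classical
  have hScomp := sphere_compact (n := n) hn
  have hSne := sphere_nonempty (n := n) hn
  have hcont : ContinuousOn (fun y : Fin n → ℝ => tscal A y / tscal B y)
      {y | vnorm y = 1} := by
    apply ContinuousOn.div (continuous_tscal A).continuousOn (continuous_tscal B).continuousOn
    intro y hy
    exact (hBpos y (vnorm_ne hy)).ne'
  obtain ⟨xmax, hxmaxS, hxmax⟩ := hScomp.exists_isMaxOn hSne hcont
  obtain ⟨xmin, hxminS, hxmin⟩ := hScomp.exists_isMinOn hSne hcont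
  refine ⟨hcont, ⟨xmax, hxmaxS, fun y hy => hxmax hy⟩,
    ⟨xmin, hxminS, fun y hy => hxmin hy⟩, ?_⟩
  intro x hx hcase
  rcases hcase with hmaxc | hminc
  · exact max_case A B hA hB hBpos x hx hmaxc
  · set A' : (Fin (m + 1) → Fin n) → ℝ := fun j => -A j with hA'
    have hA'symm : IsSymmT A' := fun σ i => by simp only [hA']; rw [hA σ i]
    have htsA' : ∀ y, tscal A' y = -tscal A y := by
      intro y; unfold tscal; simp [hA', neg_mul]
    have htvA' : tvec A' x = -tvec A x := by
      funext i
      unfold tvec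
      simp [hA', neg_mul]
    have hmax' : ∀ y, vnorm y = 1 → tscal A' y / tscal B y ≤ tscal A' x / tscal B x := by
      intro y hy
      rw [htsA', htsA', neg_div, neg_div]
      exact neg_le_neg (hminc y hy)
    have hres := max_case A' B hA'symm hB hBpos x hx hmax'
    rw [htvA', htsA'] at hres
    have h2 : -tvec A x = -((tscal A x / tscal B x) • tvec B x) := by
      rw [hres, neg_div, neg_smul]
    exact neg_injective h2
end
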